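/- An integer d ≥ 1 is the area of a right triangle with rational side lengths if and only if the elliptic curve E_d : d·y² = x³ − x has a rational point with y ≠ 0. -/

import Mathlib

/-- The congruent number problem: an integer `d ≥ 1` is the area of a right triangle with
rational side lengths iff the curve `E_d : d * y ^ 2 = x ^ 3 - x` has a rational point
with `y ≠ 0`. -/
theorem congruent_iff_point_on_Ed (d : ℤ) (hd : 1 ≤ d) :
    (∃ a b c : ℚ, 0 < a ∧ 0 < b ∧ 0 < c ∧ a ^ 2 + b ^ 2 = c ^ 2 ∧ a * b / 2 = d) ↔
      ∃ x y : ℚ, y ≠ 0 ∧ (d : ℚ) * y ^ 2 = x ^ 3 - x := by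
  have hd' : (0 : ℚ) < d := by exact_mod_cast hd
  constructor
  · rintro ⟨a, b, c, ha, hb, hc, hpyth, harea⟩
    have hb' : b ≠ 0 := hb.ne'
    refine ⟨(a + c) / b, 2 * (a + c) / b ^ 2, ?_, ?_⟩
    · have : 0 < 2 * (a + c) / b ^ 2 := by positivity
      exact this.ne'
    · have hdq : (d : ℚ) = a * b / 2 := harea.symm
      rw [hdq, ← sub_eq_zero]
      have hfac : a * b / 2 * (2 * (a + c) / b ^ 2) ^ 2 - (((a + c) / b) ^ 3 - (a + c) / b)
          = (a + c) * (a ^ 2 + b ^ 2 - c ^ 2) / b ^ 3 := by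
        field_simp
        ring
      have hz : a ^ 2 + b ^ 2 - c ^ 2 = 0 := by linarith
      rw [hfac, hz]
      simp
  · rintro ⟨x, y, hy, heq⟩
    have hy2 : (0 : ℚ) < y ^ 2 := by positivity
    have hx0 : x ≠ 0 := by
      rintro rfl
      have : (d : ℚ) * y ^ 2 = 0 := by simpa using heq
      nlinarith
    have hx1 : x ^ 2 ≠ 1 := by
      intro h
      have : x ^ 3 - x = x * (x ^ 2 - 1) := by ring
      rw [h] at this
      simp at this
      rw [this] at heq
      nlinarith
    refine ⟨|x ^ 2 - 1| / |y|, 2 * |x| / |y|, (x ^ 2 + 1) / |y|, ?_, ?_, ?_, ?_, ?_⟩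
    · have h1 : 0 < |x ^ 2 - 1| := abs_pos.mpr (sub_ne_zero.mpr hx1)
      have h2 : 0 < |y| := abs_pos.mpr hy
      positivity
    · have h1 : 0 < |x| := abs_pos.mpr hx0
      have h2 : 0 < |y| := abs_pos.mpr hy
      positivity
    · have h2 : 0 < |y| := abs_pos.mpr hy
      have : 0 < x ^ 2 + 1 := by positivity
      positivity
    · have h2 : (|y| : ℚ) ≠ 0 := abs_ne_zero.mpr hy
      have hys : |y| ^ 2 = y ^ 2 := sq_abs y
      field_simp
      rw [sq_abs, sq_abs]
      ring
    · have h2 : (|y| : ℚ) ≠ 0 := abs_ne_zero.mpr hy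
      have key : |x ^ 2 - 1| * |x| = (d : ℚ) * y ^ 2 := by
        rw [← abs_mul]
        have : (x ^ 2 - 1) * x = x ^ 3 - x := by ring
        rw [this, ← heq]
        exact abs_of_pos (by positivity)
      field_simp
      rw [sq_abs]
      linear_combination key
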